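/- The sequence u_n = 1 − n + n·cos(nθ), for θ/(2π) irrational, has a sign description that is not almost periodic: the letter '+' occurs infinitely often in the word (sgn(u_n))_{n∈ℕ}, but the gaps between consecutive occurrences of '+' are unbounded. -/

import Mathlib

open Real

/-- `w` occurs at position `n` of the infinite word `α`. -/
def Occurs {A : Type*} (w : List A) (α : ℕ → A) (n : ℕ) : Prop :=
  ∀ i (h : i < w.length), w.get ⟨i, h⟩ = α (n + i)

/-- `α` is almost periodic. -/
def AlmostPeriodic {A : Type*} (α : ℕ → A) : Prop :=
  ∀ w : List A, ∃ p : ℕ,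
    (∀ n, p ≤ n → ¬ Occurs w α n) ∨
    (∀ n : ℕ, ∃ m, n ≤ m ∧ m + w.length ≤ n + p ∧ Occurs w α m)


section Aux


lemma round_min (x : ℝ) (j : ℤ) : |x - round x| ≤ |x - j| := by
  by_cases h : j = round x
  · rw [h]
  · have h1 : (1 : ℝ) ≤ |(j : ℝ) - round x| := by
      have : j - round x ≠ 0 := sub_ne_zero.mpr h
      have := Int.one_le_abs this
      calc (1:ℝ) ≤ |(j - round x : ℤ)| := by exact_mod_cast this
        _ = |(j : ℝ) - round x| := by push_cast; ring_nf
    have h2 : |x - round x| ≤ 1/2 := abs_sub_round x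
    have h3 : |(j:ℝ) - round x| ≤ |x - j| + |x - round x| := by
      calc |(j:ℝ) - round x| = |(x - round x) - (x - j)| := by ring_nf
        _ ≤ |x - round x| + |x - j| := abs_sub _ _
        _ = |x - j| + |x - round x| := by ring
    linarith

lemma dirichlet_aux {θ : ℝ} (hθ : Irrational (θ / (2 * π))) (K : ℕ) {ε : ℝ} (hε : 0 < ε) :
    ∃ (k : ℕ) (j : ℤ), K < k ∧ 0 < |(k:ℝ) * θ - 2 * π * j| ∧ |(k:ℝ) * θ - 2 * π * j| < ε ∧
      (k : ℝ) * ((k:ℝ) * θ - 2 * π * j)^2 < 2 := by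
  have hπ : (0:ℝ) < π := pi_pos
  set ξ := θ / (2 * π) with hξdef
  have hθξ : θ = 2 * π * ξ := by rw [hξdef]; field_simp
  -- a positive lower bound for |k ξ - j| over 1 ≤ k ≤ K
  have hmin : ∃ ε₁ : ℝ, 0 < ε₁ ∧ ∀ k : ℕ, 1 ≤ k → k ≤ K → ∀ j : ℤ, ε₁ ≤ |(k:ℝ) * ξ - j| := by
    rcases Finset.eq_empty_or_nonempty (Finset.Icc 1 K) with he | hne
    · exact ⟨1, one_pos, fun k hk1 hk2 j => absurd (Finset.mem_Icc.mpr ⟨hk1, hk2⟩) (he ▸ Finset.notMem_empty k)⟩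
    · obtain ⟨b, hb, hbmin⟩ := Finset.exists_min_image (Finset.Icc 1 K)
        (fun k => |(k:ℝ) * ξ - round ((k:ℝ) * ξ)|) hne
      refine ⟨|(b:ℝ) * ξ - round ((b:ℝ) * ξ)|, ?_, ?_⟩
      · have hb1 : 1 ≤ b := (Finset.mem_Icc.mp hb).1
        have hbZ : ((b:ℤ)) ≠ 0 := by exact_mod_cast Nat.one_le_iff_ne_zero.mp hb1
        have hirr : Irrational ((b:ℝ) * ξ) := by
          have h := hθ.intCast_mul hbZ
          have : ((b:ℤ):ℝ) = (b:ℝ) := by push_cast; ring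
          rwa [this] at h
        exact abs_pos.mpr (sub_ne_zero.mpr (hirr.ne_int _))
      · intro k hk1 hk2 j
        have hk : k ∈ Finset.Icc 1 K := Finset.mem_Icc.mpr ⟨hk1, hk2⟩
        exact (hbmin k hk).trans (round_min _ j)
  obtain ⟨ε₁, hε₁, hlow⟩ := hmin
  -- choose n large
  obtain ⟨n, hn⟩ := exists_nat_gt (max (1/ε₁) (max (2*π/ε) (2*π^2)))
  have hn1 : (1:ℝ)/ε₁ < n := lt_of_le_of_lt (le_max_left _ _) hn
  have hn2 : 2*π/ε < n := lt_of_le_of_lt ((le_max_left _ _).trans (le_max_right _ _)) hn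
  have hn3 : 2*π^2 < n := lt_of_le_of_lt ((le_max_right _ _).trans (le_max_right _ _)) hn
  have hnpos : 0 < n := by
    by_contra h
    push_neg at h
    interval_cases n
    · simp at hn3; nlinarith
  obtain ⟨j, k, hk0, hkn, hjk⟩ := Real.exists_int_int_abs_mul_sub_le ξ hnpos
  have hnn : (0:ℝ) < (n:ℝ) + 1 := by positivity
  have hkc : ((k.toNat : ℕ) : ℝ) = (k : ℝ) := by
    exact_mod_cast congrArg (fun z : ℤ => (z : ℝ)) (Int.toNat_of_nonneg hk0.le)
  have hkr : (0:ℝ) < (k:ℝ) := by exact_mod_cast hk0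
  have hkξ : (k:ℝ) * ξ - j ≠ 0 := by
    have hirr : Irrational ((k:ℝ) * ξ) := by
      have h := hθ.intCast_mul hk0.ne'
      have : ((k:ℤ):ℝ) = (k:ℝ) := rfl
      rwa [this] at h
    exact sub_ne_zero.mpr (hirr.ne_int _)
  have habs : |(k:ℝ)*θ - 2*π*j| = 2*π*|(k:ℝ)*ξ - j| := by
    have h1 : (k:ℝ)*θ - 2*π*j = (2*π) * ((k:ℝ)*ξ - j) := by rw [hθξ]; ring
    rw [h1, abs_mul, abs_of_pos (by positivity : (0:ℝ) < 2*π)]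
  have key : |(k:ℝ)*ξ - j| ≤ 1/((n:ℝ)+1) := by exact_mod_cast hjk
  have hknr : (k:ℝ) ≤ (n:ℝ) := by exact_mod_cast hkn
  refine ⟨k.toNat, j, ?_, ?_, ?_, ?_⟩
  · by_contra h
    push_neg at h
    have h1 : 1 ≤ k.toNat := by omega
    have h2 := hlow k.toNat h1 h j
    rw [hkc] at h2
    have h3 : 1/((n:ℝ)+1) < ε₁ := by
      rw [div_lt_iff₀ hnn]
      have : (1:ℝ)/ε₁ < (n:ℝ)+1 := by linarith
      rw [div_lt_iff₀ hε₁] at this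
      nlinarith
    linarith
  · rw [hkc, habs]
    have : 0 < |(k:ℝ)*ξ - j| := abs_pos.mpr hkξ
    positivity
  · rw [hkc, habs]
    have h4 : 2*π/ε < (n:ℝ)+1 := by linarith
    rw [div_lt_iff₀ hε] at h4
    calc 2*π*|(k:ℝ)*ξ - j| ≤ 2*π*(1/((n:ℝ)+1)) := by
          have : (0:ℝ) < 2*π := by positivity
          exact mul_le_mul_of_nonneg_left key this.le
      _ < ε := by rw [mul_one_div, div_lt_iff₀ hnn]; nlinarith
  · rw [hkc]
    set a := |(k:ℝ)*ξ - j| with ha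
    have ha0 : 0 ≤ a := abs_nonneg _
    have hsq : ((k:ℝ)*θ - 2*π*j)^2 = 4*π^2*a^2 := by
      rw [← sq_abs, habs]; ring
    have haa : a * ((n:ℝ)+1) ≤ 1 := (le_div_iff₀ hnn).mp key
    have hπ2 : 2*π^2 < (n:ℝ) := hn3
    rw [hsq]
    have h5 : a^2 * ((n:ℝ)+1)^2 ≤ 1 := by
      have h := mul_le_mul haa haa (mul_nonneg ha0 hnn.le) zero_le_one
      nlinarith [h]
    have h6 : (k:ℝ) * (4*π^2*a^2) * ((n:ℝ)+1)^2 ≤ 4*π^2*(n:ℝ) := by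
      have t1 : (k:ℝ)*(4*π^2*a^2)*((n:ℝ)+1)^2 = ((k:ℝ)*(4*π^2)) * (a^2*((n:ℝ)+1)^2) := by ring
      rw [t1]
      calc ((k:ℝ)*(4*π^2)) * (a^2*((n:ℝ)+1)^2) ≤ ((k:ℝ)*(4*π^2)) * 1 :=
            mul_le_mul_of_nonneg_left h5 (by positivity)
        _ = (k:ℝ)*(4*π^2) := mul_one _
        _ ≤ (n:ℝ)*(4*π^2) := mul_le_mul_of_nonneg_right hknr (by positivity)
        _ = 4*π^2*(n:ℝ) := by ring
    have h7 : 4*π^2*(n:ℝ) < 2*((n:ℝ)+1)^2 := by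
      have hn1' : (1:ℝ) ≤ (n:ℝ) := by exact_mod_cast hnpos
      nlinarith [hπ2, hn1']
    have h8 : (0:ℝ) < ((n:ℝ)+1)^2 := by positivity
    exact (mul_lt_mul_iff_of_pos_right h8).mp (by linarith)

/-- Density of the forward orbit: arbitrarily far out, `nθ` comes `ε`-close to `x` mod `2π`. -/
lemma dense_aux {θ : ℝ} (hθ : Irrational (θ / (2 * π))) (n₀ : ℕ) (x : ℝ) {ε : ℝ} (hε : 0 < ε) :
    ∃ n : ℕ, n₀ ≤ n ∧ ∃ j : ℤ, |(n:ℝ) * θ - x - 2 * π * j| < ε := by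
  have hπ : (0:ℝ) < π := pi_pos
  obtain ⟨k, j₀, hkK, hγ0, hγε, -⟩ := dirichlet_aux hθ n₀ hε
  set γ := (k:ℝ) * θ - 2 * π * j₀ with hγdef
  have hγne : γ ≠ 0 := abs_pos.mp hγ0
  have hk1 : 1 ≤ k := Nat.one_le_iff_ne_zero.mpr (by omega)
  -- choose M with (x + 2πM)/γ ≥ n₀ + 1
  have hM : ∃ M : ℤ, ((n₀:ℝ) + 1) ≤ (x + 2 * π * M) / γ := by
    rcases lt_or_gt_of_ne hγne with hneg | hpos
    · refine ⟨⌊(((n₀:ℝ)+1) * γ - x) / (2*π)⌋, ?_⟩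
      have h1 : 2*π*(⌊(((n₀:ℝ)+1) * γ - x) / (2*π)⌋ : ℝ) ≤ ((n₀:ℝ)+1) * γ - x := by
        have := Int.floor_le ((((n₀:ℝ)+1) * γ - x) / (2*π))
        calc 2*π*(⌊(((n₀:ℝ)+1) * γ - x) / (2*π)⌋ : ℝ)
            ≤ 2*π*((((n₀:ℝ)+1) * γ - x) / (2*π)) := by
              apply mul_le_mul_of_nonneg_left this (by positivity)
          _ = ((n₀:ℝ)+1) * γ - x := by field_simp
      rw [le_div_iff_of_neg hneg]
      linarith
    · refine ⟨⌈(((n₀:ℝ)+1) * γ - x) / (2*π)⌉, ?_⟩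
      have h1 : ((n₀:ℝ)+1) * γ - x ≤ 2*π*(⌈(((n₀:ℝ)+1) * γ - x) / (2*π)⌉ : ℝ) := by
        have := Int.le_ceil ((((n₀:ℝ)+1) * γ - x) / (2*π))
        calc ((n₀:ℝ)+1) * γ - x = 2*π*((((n₀:ℝ)+1) * γ - x) / (2*π)) := by field_simp
          _ ≤ 2*π*(⌈(((n₀:ℝ)+1) * γ - x) / (2*π)⌉ : ℝ) := by
              apply mul_le_mul_of_nonneg_left this (by positivity)
      rw [le_div_iff₀ hpos]
      linarith
  obtain ⟨M, hMy⟩ := hM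
  set y := x + 2 * π * M with hydef
  set s : ℤ := round (y / γ) with hsdef
  have hs1 : ((n₀:ℝ) + 1) - 1/2 ≤ (s:ℝ) := by
    have h := abs_sub_round (y / γ)
    have h2 := abs_le.mp h
    linarith [h2.1, hMy]
  have hsn₀ : (n₀ : ℤ) < s := by
    have : ((n₀:ℝ)) < (s:ℝ) := by linarith
    exact_mod_cast this
  have hs0 : 0 ≤ s := le_of_lt (lt_of_le_of_lt (Int.ofNat_nonneg n₀) hsn₀ |>.trans_le le_rfl)
  refine ⟨s.toNat * k, ?_, s.toNat * j₀ + M, ?_⟩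
  · have h1 : n₀ < s.toNat := by omega
    calc n₀ ≤ s.toNat := h1.le
      _ = s.toNat * 1 := (mul_one _).symm
      _ ≤ s.toNat * k := Nat.mul_le_mul_left _ hk1
  · have hsr : ((s.toNat : ℕ) : ℝ) = (s:ℝ) := by
      exact_mod_cast congrArg (fun z : ℤ => (z : ℝ)) (Int.toNat_of_nonneg hs0)
    have hexp : ((s.toNat * k : ℕ) : ℝ) * θ - x - 2 * π * ((s.toNat * j₀ + M : ℤ) : ℝ)
        = (s:ℝ) * γ - y := by
      push_cast
      rw [hsr]
      rw [hγdef, hydef]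
      ring
    rw [hexp]
    have hfar : |(s:ℝ) * γ - y| = |γ| * |(s:ℝ) - y/γ| := by
      rw [← abs_mul]
      congr 1
      field_simp
    rw [hfar]
    have h := abs_sub_round (y / γ)
    have h' : |(s:ℝ) - y/γ| ≤ 1/2 := by
      rw [abs_sub_comm]; exact h
    calc |γ| * |(s:ℝ) - y/γ| ≤ |γ| * (1/2) := mul_le_mul_of_nonneg_left h' (abs_nonneg _)
      _ < ε := by linarith [hγε, hγ0]

/-- If `y` stays at distance `≥ δ` from all multiples of `2π`, then `cos y ≤ cos δ`. -/
lemma cos_le_of_far {y δ : ℝ} (hδ : 0 < δ) (hδ' : δ ≤ π) (h : ∀ j : ℤ, δ ≤ |y - 2 * π * j|) :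
    Real.cos y ≤ Real.cos δ := by
  have hπ : (0:ℝ) < π := pi_pos
  set m : ℤ := round (y / (2 * π)) with hm
  set r : ℝ := y - 2 * π * m with hr
  have hcos : Real.cos y = Real.cos r := by
    rw [hr]
    have : y - 2 * π * m = y - m * (2 * π) := by ring
    rw [this, Real.cos_sub_int_mul_two_pi]
  have hrle : |r| ≤ π := by
    have h1 := abs_sub_round (y / (2 * π))
    have h3 : r = (2 * π) * (y / (2 * π) - m) := by
      rw [hr]; field_simp
    have h2 : |r| = 2 * π * |y / (2 * π) - m| := by
      rw [h3, abs_mul, abs_of_pos (by positivity : (0:ℝ) < 2 * π)]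
    rw [h2]
    calc 2 * π * |y / (2 * π) - m| ≤ 2 * π * (1/2) := by
          exact mul_le_mul_of_nonneg_left h1 (by positivity)
      _ = π := by ring
  have hrge : δ ≤ |r| := h m
  rw [hcos, ← Real.cos_abs r]
  exact Real.cos_le_cos_of_nonneg_of_le_pi hδ.le hrle hrge

end Aux

/-- The sign description of `u_n = 1 - n + n·cos(nθ)` (for `θ/(2π)` irrational) is not
almost periodic: the letter `+` occurs infinitely often, but with unbounded gaps. -/
theorem counterexample_not_almost_periodic (θ : ℝ) (hθ : Irrational (θ / (2 * Real.pi)))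
    (σ : ℕ → SignType)
    (hσ : ∀ n : ℕ, σ n = SignType.sign (1 - (n : ℝ) + (n : ℝ) * Real.cos (n * θ))) :
    {n : ℕ | σ n = 1}.Infinite ∧
    (∀ p : ℕ, ∃ n : ℕ, ∀ k < p, σ (n + k) ≠ 1) ∧
    ¬ AlmostPeriodic σ := by
  have hπ : (0:ℝ) < π := pi_pos
  -- Part A : infinitely many '+'
  have partA : {n : ℕ | σ n = 1}.Infinite := by
    apply Set.infinite_of_not_bddAbove
    rintro ⟨N, hN⟩
    obtain ⟨k, j, hk, -, -, hk2⟩ := dirichlet_aux hθ N one_pos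
    have hσk : σ k = 1 := by
      rw [hσ k, sign_eq_one_iff]
      have h1 : Real.cos ((k:ℝ)*θ) = Real.cos ((k:ℝ)*θ - j * (2*π)) :=
        (Real.cos_sub_int_mul_two_pi _ j).symm
      have h2 := Real.one_sub_sq_div_two_le_cos (x := (k:ℝ)*θ - j*(2*π))
      have h3 : ((k:ℝ)*θ - j*(2*π))^2 = ((k:ℝ)*θ - 2*π*j)^2 := by ring
      rw [h3] at h2
      have hk0 : (0:ℝ) ≤ (k:ℝ) := Nat.cast_nonneg k
      nlinarith [mul_le_mul_of_nonneg_left h2 hk0, hk2, h1]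
    exact absurd (hN hσk) (not_le.mpr hk)
  -- Part B : arbitrarily long blocks without '+'
  have partB : ∀ p : ℕ, ∃ n : ℕ, ∀ k < p, σ (n + k) ≠ 1 := by
    intro p
    rcases Nat.eq_zero_or_pos p with rfl | hp
    · exact ⟨0, fun k hk => absurd hk (Nat.not_lt_zero k)⟩
    set δ : ℝ := π / (4 * ((p:ℝ) + 1)) with hδdef
    have hp1 : (0:ℝ) < (p:ℝ) + 1 := by positivity
    have hδ0 : 0 < δ := by positivity
    have hδπ : δ ≤ π := by
      rw [hδdef, div_le_iff₀ (by positivity)]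
      nlinarith [hπ, Nat.cast_nonneg (α := ℝ) p]
    set x : ℕ → ℝ := fun i => 2 * π * i / ((p:ℝ) + 1) with hx
    have hcand : ∃ i, i < p + 1 ∧ ∀ k, k < p → ∀ j : ℤ, 2 * δ ≤ |x i + k * θ - 2 * π * j| := by
      by_contra hcon
      push_neg at hcon
      have h' : ∀ i : ℕ, ∃ (k : ℕ) (j : ℤ), i < p + 1 → k < p ∧ |x i + k * θ - 2 * π * j| < 2*δ := by
        intro i
        by_cases hi : i < p + 1
        · obtain ⟨k, hk, j, hj⟩ := hcon i hi
          exact ⟨k, j, fun _ => ⟨hk, hj⟩⟩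
        · exact ⟨0, 0, fun h => absurd h hi⟩
      choose g gj hg using h'
      have hmap : ∀ i ∈ Finset.range (p+1), g i ∈ Finset.range p := fun i hi =>
        Finset.mem_range.mpr (hg i (Finset.mem_range.mp hi)).1
      have hcard : (Finset.range p).card < (Finset.range (p+1)).card := by simp
      obtain ⟨i, hi, i', hi', hne, heq⟩ :=
        Finset.exists_ne_map_eq_of_card_lt_of_maps_to hcard hmap
      rw [Finset.mem_range] at hi hi'
      obtain ⟨hki, hji⟩ := hg i hi
      obtain ⟨hki', hji'⟩ := hg i' hi'
      rw [heq] at hji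
      set A : ℝ := x i + (g i') * θ - 2 * π * (gj i) with hA
      set B : ℝ := x i' + (g i') * θ - 2 * π * (gj i') with hB
      have hdiff : |x i - x i' - 2*π*((gj i : ℝ) - (gj i' : ℝ))| < 4*δ := by
        have h1 : x i - x i' - 2*π*((gj i : ℝ) - (gj i' : ℝ)) = A - B := by
          rw [hA, hB]; ring
        rw [h1]
        calc |A - B| ≤ |A| + |B| := abs_sub A B
          _ < 2*δ + 2*δ := add_lt_add hji hji'
          _ = 4*δ := by ring
      have hxx : x i - x i' - 2*π*((gj i : ℝ) - (gj i' : ℝ))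
          = 2*π*(((i:ℝ) - (i':ℝ)) - ((gj i : ℝ) - (gj i' : ℝ))*((p:ℝ)+1))/((p:ℝ)+1) := by
        rw [hx]
        field_simp
      rw [hxx] at hdiff
      have h4δ : 4*δ = π/((p:ℝ)+1) := by rw [hδdef]; field_simp
      rw [h4δ] at hdiff
      have habs : |((i:ℝ) - (i':ℝ)) - ((gj i : ℝ) - (gj i' : ℝ))*((p:ℝ)+1)| < 1/2 := by
        have h5 : |2*π*(((i:ℝ) - (i':ℝ)) - ((gj i : ℝ) - (gj i' : ℝ))*((p:ℝ)+1))/((p:ℝ)+1)|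
            = (2*π/((p:ℝ)+1)) * |((i:ℝ) - (i':ℝ)) - ((gj i : ℝ) - (gj i' : ℝ))*((p:ℝ)+1)| := by
          rw [← abs_of_pos (by positivity : (0:ℝ) < 2*π/((p:ℝ)+1)), ← abs_mul]
          congr 1
          field_simp
        rw [h5] at hdiff
        by_contra hc
        push_neg at hc
        have : (2*π/((p:ℝ)+1)) * (1/2) ≤ (2*π/((p:ℝ)+1)) * |((i:ℝ) - (i':ℝ)) - ((gj i : ℝ) - (gj i' : ℝ))*((p:ℝ)+1)| :=
          mul_le_mul_of_nonneg_left hc (by positivity)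
        have hππ : (2*π/((p:ℝ)+1)) * (1/2) = π/((p:ℝ)+1) := by ring
        linarith
      set z : ℤ := ((i:ℤ) - (i':ℤ)) - ((gj i) - (gj i'))*((p:ℤ)+1) with hz
      have hzr : ((z:ℤ):ℝ) = ((i:ℝ) - (i':ℝ)) - ((gj i : ℝ) - (gj i' : ℝ))*((p:ℝ)+1) := by
        rw [hz]; push_cast; ring
      have hz0 : z = 0 := by
        by_contra hzne
        have h1 : (1:ℝ) ≤ |(z:ℝ)| := by exact_mod_cast Int.one_le_abs hzne
        rw [hzr] at h1
        linarith
      have hii : (i:ℤ) - (i':ℤ) = ((gj i) - (gj i'))*((p:ℤ)+1) := by omega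
      have hdne : (gj i) - (gj i') ≠ 0 := by
        intro h
        rw [h, zero_mul] at hii
        exact hne (by omega)
      have h1 : (1:ℤ) ≤ |gj i - gj i'| := Int.one_le_abs hdne
      have h2 : |(i:ℤ) - (i':ℤ)| = |gj i - gj i'| * ((p:ℤ)+1) := by
        rw [hii, abs_mul, abs_of_pos (by positivity : (0:ℤ) < (p:ℤ)+1)]
      have h3 : |(i:ℤ) - (i':ℤ)| ≤ (p:ℤ) := by rw [abs_le]; constructor <;> omega
      nlinarith [h1, h2, h3]
    obtain ⟨i, hip, hgood⟩ := hcand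
    have hcosδ : Real.cos δ < 1 := by
      rcases lt_or_eq_of_le (Real.cos_le_one δ) with h | h
      · exact h
      · exfalso
        have := (Real.cos_eq_one_iff_of_lt_of_lt (by linarith) (by linarith)).mp h
        linarith
    set C : ℝ := 1 - Real.cos δ with hC
    have hC0 : 0 < C := by rw [hC]; linarith
    set n₁ : ℕ := max 1 ⌈1/C⌉₊ with hn₁def
    obtain ⟨n, hn₁, j, hj⟩ := dense_aux hθ n₁ (x i) hδ0
    refine ⟨n, fun k hk => ?_⟩
    intro hσ1
    rw [hσ (n+k), sign_eq_one_iff] at hσ1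
    have hfar : ∀ j' : ℤ, δ ≤ |((n+k:ℕ):ℝ) * θ - 2*π*j'| := by
      intro j'
      have hA := hgood k hk (j' - j)
      set A : ℝ := x i + k*θ - 2*π*((j' - j : ℤ):ℝ) with hAdef
      set B : ℝ := (n:ℝ)*θ - x i - 2*π*j with hBdef
      have hsplit : ((n+k:ℕ):ℝ)*θ - 2*π*(j':ℝ) = A + B := by
        rw [hAdef, hBdef]; push_cast; ring
      rw [hsplit]
      have htri : |A| ≤ |A + B| + |B| := by
        have h := abs_add_le (A + B) (-B)
        simpa using h
      linarith
    have hcos := cos_le_of_far hδ0 hδπ hfar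
    have hm1 : (1:ℝ)/C ≤ ((n+k:ℕ):ℝ) := by
      have h2 : n₁ ≤ n + k := le_trans hn₁ (Nat.le_add_right n k)
      have h3 : ⌈1/C⌉₊ ≤ n + k := le_trans (le_max_right 1 _) h2
      calc 1/C ≤ (⌈1/C⌉₊:ℝ) := Nat.le_ceil _
        _ ≤ ((n+k:ℕ):ℝ) := by exact_mod_cast h3
    have hmC : 1 ≤ ((n+k:ℕ):ℝ) * C := (div_le_iff₀ hC0).mp hm1
    have hmnn : (0:ℝ) ≤ ((n+k:ℕ):ℝ) := Nat.cast_nonneg _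
    have hexp : ((n+k:ℕ):ℝ) * C = ((n+k:ℕ):ℝ) - ((n+k:ℕ):ℝ) * Real.cos δ := by
      rw [hC]; ring
    have hmul := mul_le_mul_of_nonneg_left hcos hmnn
    push_cast at hσ1 hmul hexp hmC ⊢
    linarith
  -- Part C
  refine ⟨partA, partB, ?_⟩
  intro hap
  obtain ⟨p, hp⟩ := hap [1]
  rcases hp with hL | hR
  · obtain ⟨m, hm, hmgt⟩ := partA.exists_gt p
    refine hL m hmgt.le ?_
    intro i hi
    have hi0 : i = 0 := by simpa using hi
    subst hi0
    simpa using hm.symm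
  · obtain ⟨n, hn⟩ := partB p
    obtain ⟨m, hnm, hmp, hocc⟩ := hR n
    have hσm : σ m = 1 := by
      have := hocc 0 (by simp)
      simpa using this.symm
    have hk : m - n < p := by simp at hmp; omega
    have := hn (m - n) hk
    rw [Nat.add_sub_cancel' hnm] at this
    exact this hσm
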